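/- Let A: X → X* be continuous, linear, and monotone. Then the Penot–Zălinescu autoconjugate representer 𝒜_A and the Ghoussoub autoconjugate representer 𝒞_A coincide, and for every (x,x*) ∈ X×X*: 𝒜_A(x,x*) = 𝒞_A(x,x*) = ⟨x,x*⟩ + q_{A₊}*(x* − Ax). -/

import Mathlib

noncomputable section
open scoped Classical
open Filter Topology

/-- The Fenchel conjugate of `F : X × X* → (-∞,+∞]`, as a function on `X* × X`:
`F*(x*,x) = sup_{(y,y*)} (⟨y,x*⟩ + ⟨x,y*⟩ - F(y,y*))`. -/
def conj2 {X : Type*} [NormedAddCommGroup X] [NormedSpace ℝ X]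
    (F : X × (X →L[ℝ] ℝ) → EReal) : (X →L[ℝ] ℝ) × X → EReal :=
  fun p => ⨆ q : X × (X →L[ℝ] ℝ), ((p.1 q.1 + q.2 p.2 : ℝ) : EReal) - F q

/-- `F` is autoconjugate: `F*(x*,x) = F(x,x*)` for all `(x,x*)`. -/
def Autoconjugate {X : Type*} [NormedAddCommGroup X] [NormedSpace ℝ X]
    (F : X × (X →L[ℝ] ℝ) → EReal) : Prop :=
  ∀ (x : X) (x' : X →L[ℝ] ℝ), conj2 F (x', x) = F (x, x')

/-- `F` is a representer for the set-valued operator `A : X ⇉ X*`: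
`gra A = {(x,x*) : F(x,x*) = ⟨x,x*⟩}`. -/
def IsRepresenter {X : Type*} [NormedAddCommGroup X] [NormedSpace ℝ X]
    (F : X × (X →L[ℝ] ℝ) → EReal) (A : X → Set (X →L[ℝ] ℝ)) : Prop :=
  ∀ (x : X) (x' : X →L[ℝ] ℝ), x' ∈ A x ↔ F (x, x') = ((x' x : ℝ) : EReal)

/-- A set-valued operator `A : X ⇉ X*` is monotone. -/
def MonotoneOp {X : Type*} [NormedAddCommGroup X] [NormedSpace ℝ X]
    (A : X → Set (X →L[ℝ] ℝ)) : Prop :=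
  ∀ ⦃x y : X⦄ ⦃x' y' : X →L[ℝ] ℝ⦄, x' ∈ A x → y' ∈ A y → 0 ≤ (x' - y') (x - y)

/-- A set-valued operator is maximal monotone if it is monotone and admits no proper
monotone extension (in the sense of graph inclusion). -/
def MaximalMonotoneOp {X : Type*} [NormedAddCommGroup X] [NormedSpace ℝ X]
    (A : X → Set (X →L[ℝ] ℝ)) : Prop :=
  MonotoneOp A ∧ ∀ B : X → Set (X →L[ℝ] ℝ), MonotoneOp B → (∀ x, A x ⊆ B x) → B = A

/-- The quadratic function `q_A(x) = ½⟨x,Ax⟩` associated with a continuous linear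
`A : X → X*`. -/
def qF {X : Type*} [NormedAddCommGroup X] [NormedSpace ℝ X]
    (A : X →L[ℝ] X →L[ℝ] ℝ) : X → ℝ :=
  fun x => (1 / 2) * A x x

/-- The Fenchel conjugate of a real-valued function `φ : X → ℝ`, as an `EReal`-valued
function on `X*`: `φ*(x*) = sup_y (⟨y,x*⟩ - φ(y))`. -/
def legendre {X : Type*} [NormedAddCommGroup X] [NormedSpace ℝ X]
    (φ : X → ℝ) : (X →L[ℝ] ℝ) → EReal :=
  fun x' => ⨆ y : X, ((x' y - φ y : ℝ) : EReal)

/-- The symmetric part `A₊ = ½A + ½A*` of a continuous linear `A : X → X*`, where the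
adjoint (restricted to `X`) is `A.flip`. -/
def symPart {X : Type*} [NormedAddCommGroup X] [NormedSpace ℝ X]
    (A : X →L[ℝ] X →L[ℝ] ℝ) : X →L[ℝ] X →L[ℝ] ℝ :=
  (1 / 2 : ℝ) • (A + A.flip)

/-- The antisymmetric part `A∘ = ½A - ½A*` of a continuous linear `A : X → X*`. -/
def antiPart {X : Type*} [NormedAddCommGroup X] [NormedSpace ℝ X]
    (A : X →L[ℝ] X →L[ℝ] ℝ) : X →L[ℝ] X →L[ℝ] ℝ :=
  (1 / 2 : ℝ) • (A - A.flip)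

/-- The Fitzpatrick function of a continuous linear `A : X → X*`:
`F_A(x,x*) = sup_y (⟨x,Ay⟩ + ⟨y,x*⟩ - ⟨y,Ay⟩)`. -/
def fitz {X : Type*} [NormedAddCommGroup X] [NormedSpace ℝ X]
    (A : X →L[ℝ] X →L[ℝ] ℝ) : X × (X →L[ℝ] ℝ) → EReal :=
  fun p => ⨆ y : X, ((A y p.1 + p.2 y - A y y : ℝ) : EReal)

/-- The Penot–Zălinescu function
`𝒜_A(x,x*) = inf_{y*} (½F_A(x, x*+y*) + ½F_A*(x*-y*, x))`. -/
def pzRep {X : Type*} [NormedAddCommGroup X] [NormedSpace ℝ X]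
    (A : X →L[ℝ] X →L[ℝ] ℝ) : X × (X →L[ℝ] ℝ) → EReal :=
  fun p => ⨅ y' : X →L[ℝ] ℝ,
    ((1 / 2 : ℝ) : EReal) * fitz A (p.1, p.2 + y')
      + ((1 / 2 : ℝ) : EReal) * conj2 (fitz A) (p.2 - y', p.1)

/-- The Ghoussoub function `𝒞_A(x,x*) = q_{A₊}(x) + q_{A₊}*(x* - A∘x)`. -/
def ghoussoub {X : Type*} [NormedAddCommGroup X] [NormedSpace ℝ X]
    (A : X →L[ℝ] X →L[ℝ] ℝ) : X × (X →L[ℝ] ℝ) → EReal :=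
  fun p => ((qF (symPart A) p.1 : ℝ) : EReal) + legendre (qF (symPart A)) (p.2 - antiPart A p.1)

namespace Stmt8Aux

open EReal

section ERealHelpers

variable {ι : Type*} [Nonempty ι]

lemma isup_ne_bot (f : ι → ℝ) : (⨆ i, ((f i : ℝ) : EReal)) ≠ ⊥ := by
  intro h
  have h2 := le_iSup (fun i => ((f i : ℝ) : EReal)) (Classical.arbitrary ι)
  rw [h, le_bot_iff] at h2
  exact EReal.coe_ne_bot _ h2

lemma exists_coe {x : EReal} (hb : x ≠ ⊥) (ht : x ≠ ⊤) : ∃ r : ℝ, x = (r : EReal) := by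
  induction x using EReal.rec with
  | bot => exact absurd rfl hb
  | coe r => exact ⟨r, rfl⟩
  | top => exact absurd rfl ht

lemma isup_add_coe (f : ι → ℝ) (c : ℝ) :
    (⨆ i, ((f i + c : ℝ) : EReal)) = (⨆ i, ((f i : ℝ) : EReal)) + (c : EReal) := by
  apply le_antisymm
  · refine iSup_le fun i => ?_
    rw [EReal.coe_add]
    exact add_le_add_left (le_iSup (fun i => ((f i : ℝ) : EReal)) i) _
  · have h : (⨆ i, ((f i : ℝ) : EReal)) ≤ (⨆ i, ((f i + c : ℝ) : EReal)) - (c : EReal) := by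
      refine iSup_le fun i => ?_
      have h1 : ((f i : ℝ) : EReal) = ((f i + c : ℝ) : EReal) - (c : EReal) := by
        rw [EReal.coe_add]; exact (EReal.add_sub_cancel_right).symm
      rw [h1]
      exact EReal.sub_le_sub (le_iSup (fun i => ((f i + c : ℝ) : EReal)) i) le_rfl
    calc (⨆ i, ((f i : ℝ) : EReal)) + (c : EReal)
        ≤ ((⨆ i, ((f i + c : ℝ) : EReal)) - (c : EReal)) + (c : EReal) :=
          add_le_add_left h _
      _ = _ := EReal.sub_add_cancel

lemma isup_coe_mul (c : ℝ) (hc : 0 < c) (f : ι → ℝ) :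
    (⨆ i, ((c * f i : ℝ) : EReal)) = (c : EReal) * ⨆ i, ((f i : ℝ) : EReal) := by
  rcases eq_or_ne (⨆ i, ((f i : ℝ) : EReal)) ⊤ with hS | hS
  · rw [hS, EReal.coe_mul_top_of_pos hc, EReal.eq_top_iff_forall_lt]
    intro y
    have h1 : ((y / c : ℝ) : EReal) < ⨆ i, ((f i : ℝ) : EReal) := hS ▸ EReal.coe_lt_top _
    rw [lt_iSup_iff] at h1
    obtain ⟨i, hi⟩ := h1
    rw [lt_iSup_iff]
    refine ⟨i, ?_⟩
    rw [EReal.coe_lt_coe_iff] at hi ⊢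
    calc y = c * (y / c) := by field_simp
      _ < c * f i := mul_lt_mul_of_pos_left hi hc
  · obtain ⟨s, hs⟩ := exists_coe (isup_ne_bot f) hS
    have hfle : ∀ i, f i ≤ s := fun i =>
      EReal.coe_le_coe_iff.mp (hs ▸ le_iSup (fun i => ((f i : ℝ) : EReal)) i)
    have hTle : (⨆ i, ((c * f i : ℝ) : EReal)) ≤ ((c * s : ℝ) : EReal) :=
      iSup_le fun i => EReal.coe_le_coe_iff.mpr
        (mul_le_mul_of_nonneg_left (hfle i) hc.le)
    have hTt : (⨆ i, ((c * f i : ℝ) : EReal)) ≠ ⊤ := by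
      intro h; rw [h] at hTle; exact (EReal.coe_lt_top _).not_ge hTle
    obtain ⟨t, ht⟩ := exists_coe (isup_ne_bot _) hTt
    have hcf : ∀ i, c * f i ≤ t := fun i =>
      EReal.coe_le_coe_iff.mp (ht ▸ le_iSup (fun i => ((c * f i : ℝ) : EReal)) i)
    have hst : s ≤ t / c := by
      have : (⨆ i, ((f i : ℝ) : EReal)) ≤ ((t / c : ℝ) : EReal) :=
        iSup_le fun i => EReal.coe_le_coe_iff.mpr
          ((le_div_iff₀ hc).mpr (by rw [mul_comm]; exact hcf i))
      rw [hs] at this; exact EReal.coe_le_coe_iff.mp this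
    have h1 : c * s ≤ t := by
      rw [mul_comm]; exact (le_div_iff₀ hc).mp hst
    have h2 : t ≤ c * s := EReal.coe_le_coe_iff.mp (ht ▸ hTle)
    rw [ht, hs, ← EReal.coe_mul]
    exact congrArg _ (le_antisymm h2 h1)

lemma coe_mul_ne_bot {c : ℝ} (hc : 0 < c) {e : EReal} (he : e ≠ ⊥) : (c : EReal) * e ≠ ⊥ := by
  induction e using EReal.rec with
  | bot => exact absurd rfl he
  | coe r => rw [← EReal.coe_mul]; exact EReal.coe_ne_bot _
  | top => rw [EReal.coe_mul_top_of_pos hc]; exact top_ne_bot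

end ERealHelpers

section OperatorLemmas

variable {X : Type*} [NormedAddCommGroup X] [NormedSpace ℝ X]
variable (A : X →L[ℝ] X →L[ℝ] ℝ)

lemma symPart_apply (y z : X) : symPart A y z = (1 / 2) * (A y z + A z y) := by
  simp only [symPart, ContinuousLinearMap.smul_apply, ContinuousLinearMap.add_apply,
    ContinuousLinearMap.flip_apply, smul_eq_mul]

lemma antiPart_apply (y z : X) : antiPart A y z = (1 / 2) * (A y z - A z y) := by
  simp [antiPart, ContinuousLinearMap.smul_apply, ContinuousLinearMap.sub_apply,
    ContinuousLinearMap.flip_apply, smul_eq_mul]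

lemma qF_sym (y : X) : qF (symPart A) y = (1 / 2) * A y y := by
  rw [qF, symPart_apply]; ring

lemma legendre_ne_bot (φ : X → ℝ) (w : X →L[ℝ] ℝ) : legendre φ w ≠ ⊥ :=
  isup_ne_bot _

lemma legendre_shift (w : X →L[ℝ] ℝ) (y : X) :
    legendre (qF (symPart A)) (w + symPart A y)
      = legendre (qF (symPart A)) w
        + ((w y + qF (symPart A) y : ℝ) : EReal) := by
  have h1 : legendre (qF (symPart A)) (w + symPart A y)
      = ⨆ z : X, ((((w z - qF (symPart A) z) + (w y + qF (symPart A) y) : ℝ)) : EReal) := by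
    rw [legendre]
    rw [← (Equiv.addRight y).iSup_comp
      (g := fun z => (((w + symPart A y) z - qF (symPart A) z : ℝ) : EReal))]
    refine iSup_congr fun z => ?_
    norm_cast
    simp only [Equiv.coe_addRight, ContinuousLinearMap.add_apply, map_add,
      symPart_apply, qF_sym]
    ring
  rw [h1, isup_add_coe]
  rfl

lemma legendre_zero (hmono : ∀ x : X, 0 ≤ A x x) :
    legendre (qF (symPart A)) (0 : X →L[ℝ] ℝ) = 0 := by
  apply le_antisymm
  · refine iSup_le fun z => ?_
    have h1 : (0 : X →L[ℝ] ℝ) z - qF (symPart A) z ≤ 0 := by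
      rw [qF_sym]
      have := hmono z
      simp only [ContinuousLinearMap.zero_apply]
      linarith
    exact_mod_cast EReal.coe_le_coe_iff.mpr h1
  · have := le_iSup (fun z : X => (((0 : X →L[ℝ] ℝ) z - qF (symPart A) z : ℝ) : EReal)) 0
    simpa [legendre, qF_sym] using this

lemma legendre_symPart (hmono : ∀ x : X, 0 ≤ A x x) (y : X) :
    legendre (qF (symPart A)) (symPart A y) = ((qF (symPart A) y : ℝ) : EReal) := by
  have := legendre_shift A 0 y
  rw [zero_add, legendre_zero A hmono, zero_add] at this
  simpa using this

lemma fitz_eq (x : X) (z : X →L[ℝ] ℝ) :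
    fitz A (x, z) = ((2 : ℝ) : EReal)
      * legendre (qF (symPart A)) ((1 / 2 : ℝ) • (z + A.flip x)) := by
  rw [legendre, ← isup_coe_mul 2 (by norm_num), fitz]
  refine iSup_congr fun y => ?_
  norm_cast
  simp only [ContinuousLinearMap.smul_apply, ContinuousLinearMap.add_apply,
    ContinuousLinearMap.flip_apply, smul_eq_mul, qF_sym]
  ring

lemma half_fitz (x : X) (z : X →L[ℝ] ℝ) :
    ((1 / 2 : ℝ) : EReal) * fitz A (x, z)
      = legendre (qF (symPart A)) ((1 / 2 : ℝ) • (z + A.flip x)) := by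
  rw [fitz_eq, ← mul_assoc, ← EReal.coe_mul]
  norm_num

lemma fitz_ne_bot (p : X × (X →L[ℝ] ℝ)) : fitz A p ≠ ⊥ :=
  isup_ne_bot _

lemma fitz_val (hmono : ∀ x : X, 0 ≤ A x x) (x y : X) :
    fitz A (y, (2 : ℝ) • (symPart A x) - A.flip y) = ((A x x : ℝ) : EReal) := by
  have hterm : ∀ w : X,
      A w y + ((2 : ℝ) • (symPart A x) - A.flip y) w - A w w
        = A x x - A (w - x) (w - x) := by
    intro w
    simp only [ContinuousLinearMap.sub_apply, ContinuousLinearMap.smul_apply,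
      ContinuousLinearMap.flip_apply, smul_eq_mul, symPart_apply, map_sub,
      ContinuousLinearMap.sub_apply]
    ring
  apply le_antisymm
  · refine iSup_le fun w => ?_
    dsimp only
    rw [hterm w]
    refine EReal.coe_le_coe_iff.mpr ?_
    have := hmono (w - x)
    linarith
  · have h := le_iSup (fun w : X =>
      ((A w y + ((2 : ℝ) • (symPart A x) - A.flip y) w - A w w : ℝ) : EReal)) x
    rw [hterm x] at h
    have h2 : ((A x x - A (x - x) (x - x) : ℝ) : EReal) = ((A x x : ℝ) : EReal) := by
      simp
    rw [h2] at h
    exact h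

lemma fitz_graph (hmono : ∀ x : X, 0 ≤ A x x) (x : X) :
    fitz A (x, A x) = ((A x x : ℝ) : EReal) := by
  have h1 : A x = (2 : ℝ) • (symPart A x) - A.flip x := by
    ext z
    simp only [ContinuousLinearMap.sub_apply, ContinuousLinearMap.smul_apply,
      ContinuousLinearMap.flip_apply, smul_eq_mul, symPart_apply]
    ring
  rw [show ((x, A x) : X × (X →L[ℝ] ℝ)) = (x, (2 : ℝ) • (symPart A x) - A.flip x) by rw [← h1]]
  exact fitz_val A hmono x x

lemma conj2_fitz_graph (hmono : ∀ x : X, 0 ≤ A x x) (x : X) :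
    conj2 (fitz A) (A x, x) = ((A x x : ℝ) : EReal) := by
  apply le_antisymm
  · refine iSup_le fun q => ?_
    obtain ⟨y, y'⟩ := q
    have h1 : ((A x y + y' x - A x x : ℝ) : EReal) ≤ fitz A (y, y') := by
      have := le_iSup (fun w : X => ((A w y + y' w - A w w : ℝ) : EReal)) x
      exact this
    calc (((A x) y + y' x : ℝ) : EReal) - fitz A (y, y')
        ≤ ((A x y + y' x : ℝ) : EReal) - ((A x y + y' x - A x x : ℝ) : EReal) :=
          EReal.sub_le_sub le_rfl h1
      _ = ((A x x : ℝ) : EReal) := by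
          rw [← EReal.coe_sub]; norm_cast; ring
  · have h := le_iSup (fun q : X × (X →L[ℝ] ℝ) =>
      (((A x) q.1 + q.2 x : ℝ) : EReal) - fitz A q) (x, A x)
    rw [fitz_graph A hmono x] at h
    calc ((A x x : ℝ) : EReal)
        = ((A x x + A x x : ℝ) : EReal) - ((A x x : ℝ) : EReal) := by
          rw [← EReal.coe_sub]; norm_cast; ring
      _ ≤ _ := h

lemma conj2_fitz_top (hmono : ∀ x : X, 0 ≤ A x x) (x : X) (x' : X →L[ℝ] ℝ)
    (h : x' ≠ A x) : conj2 (fitz A) (x', x) = ⊤ := by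
  rw [EReal.eq_top_iff_forall_lt]
  intro r
  have hy : ∃ y₀ : X, x' y₀ - A x y₀ ≠ 0 := by
    by_contra hc
    push_neg at hc
    exact h (ContinuousLinearMap.ext fun z => by have := hc z; linarith)
  obtain ⟨y₀, hd⟩ := hy
  set d : ℝ := x' y₀ - A x y₀ with hd_def
  set t : ℝ := (r + 1 - A x x) / d with ht_def
  set y : X := t • y₀ with hy_def
  set ys : X →L[ℝ] ℝ := (2 : ℝ) • (symPart A x) - A.flip y with hys_def
  have hfitz : fitz A (y, ys) = ((A x x : ℝ) : EReal) := fitz_val A hmono x y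
  have hval : x' y + ys x = t * d + 2 * A x x := by
    simp only [hys_def, hy_def, ContinuousLinearMap.sub_apply,
      ContinuousLinearMap.smul_apply, ContinuousLinearMap.flip_apply,
      smul_eq_mul, symPart_apply, map_smul, hd_def]
    ring
  have hterm : (((x' y + ys x : ℝ)) : EReal) - fitz A (y, ys)
      = ((t * d + A x x : ℝ) : EReal) := by
    rw [hfitz, hval, ← EReal.coe_sub]
    norm_cast
    ring
  have htd : t * d = r + 1 - A x x := by
    rw [ht_def, div_mul_cancel₀ _ hd]
  have hlt : (r : EReal) < ((t * d + A x x : ℝ) : EReal) := by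
    rw [EReal.coe_lt_coe_iff, htd]; linarith
  calc (r : EReal) < ((t * d + A x x : ℝ) : EReal) := hlt
    _ = (((x' y + ys x : ℝ)) : EReal) - fitz A (y, ys) := hterm.symm
    _ ≤ _ := le_iSup (fun q : X × (X →L[ℝ] ℝ) =>
        ((x' q.1 + q.2 x : ℝ) : EReal) - fitz A q) (y, ys)

end OperatorLemmas

end Stmt8Aux

/-- Theorem 3.1, Claims 1 and 2. For `A : X → X*` continuous, linear
and monotone, the Penot–Zălinescu representer `𝒜_A` and the Ghoussoub representer `𝒞_A`
coincide, and `𝒜_A(x,x*) = 𝒞_A(x,x*) = ⟨x,x*⟩ + q_{A₊}*(x* - Ax)`. -/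

theorem stmt8 {X : Type*} [NormedAddCommGroup X] [NormedSpace ℝ X] [CompleteSpace X]
    (hrefl : Function.Surjective (NormedSpace.inclusionInDoubleDual ℝ X))
    (A : X →L[ℝ] X →L[ℝ] ℝ)
    (hmono : ∀ x : X, 0 ≤ A x x) :
    ∀ (x : X) (x' : X →L[ℝ] ℝ),
      pzRep A (x, x') = ghoussoub A (x, x') ∧
      pzRep A (x, x') = ((x' x : ℝ) : EReal) + legendre (qF (symPart A)) (x' - A x) := by
  intro x x'
  have hg : ∀ y' : X →L[ℝ] ℝ, y' ≠ x' - A x →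
      ((1 / 2 : ℝ) : EReal) * fitz A (x, x' + y')
        + ((1 / 2 : ℝ) : EReal) * conj2 (fitz A) (x' - y', x) = ⊤ := by
    intro y' hne
    have hne2 : x' - y' ≠ A x := by
      intro hc
      apply hne
      rw [← hc]
      abel
    rw [Stmt8Aux.conj2_fitz_top A hmono x _ hne2,
      EReal.coe_mul_top_of_pos (by norm_num : (0 : ℝ) < 1 / 2)]
    exact EReal.add_top_of_ne_bot
      (Stmt8Aux.coe_mul_ne_bot (by norm_num) (Stmt8Aux.fitz_ne_bot A _))
  have hval : ((1 / 2 : ℝ) : EReal) * fitz A (x, x' + (x' - A x))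
      + ((1 / 2 : ℝ) : EReal) * conj2 (fitz A) (x' - (x' - A x), x)
      = legendre (qF (symPart A)) (x' - antiPart A x)
        + ((qF (symPart A) x : ℝ) : EReal) := by
    have h1 : x' - (x' - A x) = A x := by abel
    have h2 : (1 / 2 : ℝ) • ((x' + (x' - A x)) + A.flip x) = x' - antiPart A x := by
      ext z
      simp only [ContinuousLinearMap.smul_apply, ContinuousLinearMap.add_apply,
        ContinuousLinearMap.sub_apply, ContinuousLinearMap.flip_apply, smul_eq_mul,
        Stmt8Aux.antiPart_apply]
      ring
    rw [h1, Stmt8Aux.conj2_fitz_graph A hmono x, Stmt8Aux.half_fitz A x _, h2]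
    congr 1
    rw [← EReal.coe_mul]
    norm_cast
    rw [Stmt8Aux.qF_sym]
  have hpz : pzRep A (x, x')
      = legendre (qF (symPart A)) (x' - antiPart A x)
        + ((qF (symPart A) x : ℝ) : EReal) := by
    rw [pzRep]
    apply le_antisymm
    · calc (⨅ y' : X →L[ℝ] ℝ,
          ((1 / 2 : ℝ) : EReal) * fitz A (((x, x') : X × (X →L[ℝ] ℝ)).1, (x, x').2 + y')
            + ((1 / 2 : ℝ) : EReal) * conj2 (fitz A) ((x, x').2 - y', (x, x').1))
          ≤ _ := iInf_le _ (x' - A x)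
        _ = _ := hval
    · refine le_iInf fun y' => ?_
      by_cases h : y' = x' - A x
      · rw [h]
        exact le_of_eq hval.symm
      · rw [hg y' h]
        exact le_top
  refine ⟨?_, ?_⟩
  · rw [hpz, ghoussoub, add_comm]
  · rw [hpz]
    have h3 : x' - antiPart A x = (x' - A x) + symPart A x := by
      ext z
      simp only [ContinuousLinearMap.sub_apply, ContinuousLinearMap.add_apply,
        Stmt8Aux.antiPart_apply, Stmt8Aux.symPart_apply]
      ring
    rw [h3, Stmt8Aux.legendre_shift A (x' - A x) x, add_assoc, ← EReal.coe_add,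
      add_comm (legendre (qF (symPart A)) (x' - A x))]
    congr 2
    simp only [ContinuousLinearMap.sub_apply, Stmt8Aux.qF_sym]
    ring
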